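/- Let P = {p_1,...,p_n} ⊆ ℝ^d be a finite set of vectors and s ∈ ℝ^d. For any ε ∈ (0,1), there exists a subset U ⊆ P with |U| ≤ ⌈ε^{-2}⌉ + 1 such that, letting Π be the orthogonal projection onto the span of U, for all p ∈ P it holds that |⟨p, (I−Π)s⟩| ≤ ε · ‖(I−Π)p‖ · min_{q∈P} ‖q − s‖. -/

import Mathlib

open EuclideanSpace

section Helper

variable {E : Type*} [NormedAddCommGroup E] [InnerProductSpace ℝ E] [FiniteDimensional ℝ E]

private lemma proj_min' {K : Submodule ℝ E} [K.HasOrthogonalProjection] (y : E) {v : E}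
    (hv : v ∈ K) : ‖y - (Submodule.orthogonalProjectionOnto K y : E)‖ ≤ ‖y - v‖ := by
  set q : E := (Submodule.orthogonalProjectionOnto K y : E) with hq
  have h1 : y - q ∈ Kᗮ := Submodule.sub_starProjection_mem_orthogonal (K := K) y
  have h2 : q - v ∈ K := K.sub_mem (Submodule.orthogonalProjectionOnto K y).2 hv
  have horth : (inner ℝ (y - q) (q - v) : ℝ) = 0 :=
    Submodule.inner_left_of_mem_orthogonal h2 h1
  have horth2 : (inner ℝ (q - v) (y - q) : ℝ) = 0 :=
    Submodule.inner_right_of_mem_orthogonal h2 h1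
  have hdecomp : y - v = (y - q) + (q - v) := by abel
  have hsq : ‖y - v‖ ^ 2 = ‖y - q‖ ^ 2 + ‖q - v‖ ^ 2 := by
    rw [hdecomp, ← real_inner_self_eq_norm_sq, inner_add_add_self, horth, horth2,
      real_inner_self_eq_norm_sq, real_inner_self_eq_norm_sq]
    ring
  nlinarith [norm_nonneg (y - v), norm_nonneg (y - q), norm_nonneg (q - v)]

private lemma greedy (P : Finset E) (s : E) (ε m : ℝ) (hε : 0 < ε) (hm : 0 ≤ m)
    (k : ℕ) : ∀ U : Finset E, U ⊆ P →
    ‖s - (Submodule.orthogonalProjectionOnto (Submodule.span ℝ (U : Set E)) s : E)‖ ^ 2 ≤ k * (ε ^ 2 * m ^ 2) →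
    ∃ V : Finset E, U ⊆ V ∧ V ⊆ P ∧ V.card ≤ U.card + k ∧
      ∀ p ∈ P, |(inner ℝ p (s - (Submodule.orthogonalProjectionOnto (Submodule.span ℝ (V : Set E)) s : E)) : ℝ)| ≤
        ε * ‖p - (Submodule.orthogonalProjectionOnto (Submodule.span ℝ (V : Set E)) p : E)‖ * m := by
  induction k with
  | zero =>
    intro U hUP hr
    refine ⟨U, subset_rfl, hUP, by simp, ?_⟩
    have hr0 : s - (Submodule.orthogonalProjectionOnto (Submodule.span ℝ (U : Set E)) s : E) = 0 := by
      have : ‖s - (Submodule.orthogonalProjectionOnto (Submodule.span ℝ (U : Set E)) s : E)‖ = 0 := by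
        push_cast at hr
        nlinarith [norm_nonneg (s - (Submodule.orthogonalProjectionOnto (Submodule.span ℝ (U : Set E)) s : E))]
      simpa using this
    intro p hp
    rw [hr0]
    simp only [inner_zero_right, abs_zero]
    positivity
  | succ k ih =>
    intro U hUP hr
    classical
    by_cases hgood : ∀ p ∈ P,
        |(inner ℝ p (s - (Submodule.orthogonalProjectionOnto (Submodule.span ℝ (U : Set E)) s : E)) : ℝ)| ≤
        ε * ‖p - (Submodule.orthogonalProjectionOnto (Submodule.span ℝ (U : Set E)) p : E)‖ * m
    · exact ⟨U, subset_rfl, hUP, by omega, hgood⟩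
    push_neg at hgood
    obtain ⟨p, hpP, hpbad⟩ := hgood
    set K := Submodule.span ℝ (U : Set E) with hK
    set r : E := s - (Submodule.orthogonalProjectionOnto K s : E) with hrdef
    set w : E := p - (Submodule.orthogonalProjectionOnto K p : E) with hwdef
    have hrorth : r ∈ Kᗮ := Submodule.sub_starProjection_mem_orthogonal (K := K) s
    have hinner : (inner ℝ p r : ℝ) = inner ℝ w r := by
      have h0 : (inner ℝ ((Submodule.orthogonalProjectionOnto K p : E)) r : ℝ) = 0 :=
        Submodule.inner_right_of_mem_orthogonal (Submodule.orthogonalProjectionOnto K p).2 hrorth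
      have : p = w + (Submodule.orthogonalProjectionOnto K p : E) := by rw [hwdef]; abel
      rw [this, inner_add_left, h0, add_zero]
    have habs : ε * ‖w‖ * m < |(inner ℝ w r : ℝ)| := by rwa [hinner] at hpbad
    have hw0 : w ≠ 0 := by
      intro h
      rw [h] at habs
      simp at habs
    have hwpos : (0:ℝ) < ‖w‖ := norm_pos_iff.mpr hw0
    set V' := insert p U with hV'
    have hKV' : K ≤ Submodule.span ℝ (V' : Set E) := by
      apply Submodule.span_mono
      simp [hV', Finset.coe_insert, Set.subset_insert]
    set c : ℝ := (inner ℝ w r : ℝ) / ‖w‖ ^ 2 with hc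
    have hvmem : (Submodule.orthogonalProjectionOnto K s : E) + c • w ∈ Submodule.span ℝ (V' : Set E) := by
      apply Submodule.add_mem
      · exact hKV' (Submodule.orthogonalProjectionOnto K s).2
      · apply Submodule.smul_mem
        apply Submodule.sub_mem
        · exact Submodule.subset_span (by simp [hV'])
        · exact hKV' (Submodule.orthogonalProjectionOnto K p).2
    have hsv : s - ((Submodule.orthogonalProjectionOnto K s : E) + c • w) = r - c • w := by
      rw [hrdef]; abel
    have hnorm_sv : ‖r - c • w‖ ^ 2 = ‖r‖ ^ 2 - (inner ℝ w r : ℝ) ^ 2 / ‖w‖ ^ 2 := by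
      have hexp : ‖r - c • w‖ ^ 2 = ‖r‖ ^ 2 - 2 * (c * (inner ℝ w r : ℝ)) + c ^ 2 * ‖w‖ ^ 2 := by
        rw [← real_inner_self_eq_norm_sq, inner_sub_sub_self, real_inner_smul_right,
          real_inner_smul_left, real_inner_smul_left, real_inner_smul_right,
          real_inner_self_eq_norm_sq, real_inner_self_eq_norm_sq]
        rw [real_inner_comm r w]
        ring
      rw [hexp, hc]
      field_simp
      ring
    have hsq : (inner ℝ w r : ℝ) ^ 2 / ‖w‖ ^ 2 > ε ^ 2 * m ^ 2 := by
      rw [gt_iff_lt, lt_div_iff₀ (by positivity)]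
      nlinarith [abs_nonneg (inner ℝ w r : ℝ), sq_abs (inner ℝ w r : ℝ),
        mul_nonneg (mul_nonneg hε.le hwpos.le) hm]
    have hproj_le : ‖s - (Submodule.orthogonalProjectionOnto (Submodule.span ℝ (V' : Set E)) s : E)‖ ^ 2 ≤
        ‖r‖ ^ 2 - (inner ℝ w r : ℝ) ^ 2 / ‖w‖ ^ 2 := by
      rw [← hnorm_sv, ← hsv]
      have := proj_min' (K := Submodule.span ℝ (V' : Set E)) s hvmem
      nlinarith [norm_nonneg (s - ((Submodule.orthogonalProjectionOnto K s : E) + c • w)),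
        norm_nonneg (s - (Submodule.orthogonalProjectionOnto (Submodule.span ℝ (V' : Set E)) s : E))]
    have hnext : ‖s - (Submodule.orthogonalProjectionOnto (Submodule.span ℝ (V' : Set E)) s : E)‖ ^ 2 ≤
        k * (ε ^ 2 * m ^ 2) := by
      push_cast at hr ⊢
      nlinarith
    obtain ⟨V, hV'V, hVP, hVcard, hVgood⟩ := ih V' (by
      intro x hx
      rcases Finset.mem_insert.mp hx with h | h
      · rwa [h]
      · exact hUP h) hnext
    refine ⟨V, fun x hx => hV'V (Finset.mem_insert_of_mem hx), hVP, ?_, hVgood⟩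
    have hV'card : V'.card ≤ U.card + 1 := Finset.card_insert_le p U
    omega

end Helper

theorem stmt_0 {d : ℕ} (P : Finset (EuclideanSpace ℝ (Fin d))) (hP : P.Nonempty)
    (s : EuclideanSpace ℝ (Fin d)) (ε : ℝ) (hε : ε ∈ Set.Ioo (0:ℝ) 1) :
    ∃ U : Finset (EuclideanSpace ℝ (Fin d)), U ⊆ P ∧ U.card ≤ ⌈ε⁻¹ ^ 2⌉₊ + 1 ∧
      ∀ p ∈ P,
        |(inner ℝ p (s - (Submodule.orthogonalProjectionOnto (Submodule.span ℝ (U : Set (EuclideanSpace ℝ (Fin d)))) s :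
            EuclideanSpace ℝ (Fin d))) : ℝ)| ≤
          ε * ‖p - (Submodule.orthogonalProjectionOnto (Submodule.span ℝ (U : Set (EuclideanSpace ℝ (Fin d)))) p :
            EuclideanSpace ℝ (Fin d))‖ * P.inf' hP (fun q => ‖q - s‖) := by
  obtain ⟨hε0, hε1⟩ := hε
  set m : ℝ := P.inf' hP (fun q => ‖q - s‖) with hm
  obtain ⟨q, hqP, hq⟩ := Finset.exists_mem_eq_inf' hP (fun q => ‖q - s‖)
  have hm0 : 0 ≤ m := by rw [hm, hq]; exact norm_nonneg _
  set k : ℕ := ⌈ε⁻¹ ^ 2⌉₊ with hk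
  have hkge : (ε⁻¹ : ℝ) ^ 2 ≤ k := Nat.le_ceil _
  have hstart : ‖s - (Submodule.orthogonalProjectionOnto (Submodule.span ℝ (({q} : Finset (EuclideanSpace ℝ (Fin d))) : Set (EuclideanSpace ℝ (Fin d)))) s : EuclideanSpace ℝ (Fin d))‖ ^ 2 ≤ k * (ε ^ 2 * m ^ 2) := by
    have hqmem : q ∈ Submodule.span ℝ (({q} : Finset (EuclideanSpace ℝ (Fin d))) : Set (EuclideanSpace ℝ (Fin d))) :=
      Submodule.subset_span (by simp)
    have h1 := proj_min' (K := Submodule.span ℝ (({q} : Finset (EuclideanSpace ℝ (Fin d))) : Set (EuclideanSpace ℝ (Fin d)))) s hqmem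
    have h2 : ‖s - q‖ = m := by rw [norm_sub_rev, hm, hq]
    have h3 : ‖s - (Submodule.orthogonalProjectionOnto (Submodule.span ℝ (({q} : Finset (EuclideanSpace ℝ (Fin d))) : Set (EuclideanSpace ℝ (Fin d)))) s : EuclideanSpace ℝ (Fin d))‖ ^ 2 ≤ m ^ 2 := by
      rw [← h2]
      nlinarith [norm_nonneg (s - (Submodule.orthogonalProjectionOnto (Submodule.span ℝ (({q} : Finset (EuclideanSpace ℝ (Fin d))) : Set (EuclideanSpace ℝ (Fin d)))) s : EuclideanSpace ℝ (Fin d))), norm_nonneg (s - q)]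
    have hkε : (1:ℝ) ≤ k * ε ^ 2 := by
      have : (ε⁻¹:ℝ) ^ 2 * ε ^ 2 = 1 := by field_simp
      nlinarith [sq_nonneg ε]
    nlinarith [sq_nonneg m]
  obtain ⟨V, hUV, hVP, hVcard, hVgood⟩ := greedy P s ε m hε0 hm0 k {q}
    (Finset.singleton_subset_iff.mpr hqP) hstart
  refine ⟨V, hVP, ?_, hVgood⟩
  simp only [Finset.card_singleton] at hVcard
  omega
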